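/- Let A ∈ ℝ^{n×n} be symmetric nonsingular indefinite, T symmetric positive definite, and suppose there exist constants δ₁ ≥ δ₀ > 0 with δ₀(v, T^{-1}v) ≤ (v, |A|v) ≤ δ₁(v, T^{-1}v) for all v. Then every eigenvalue of TA lies in [−δ₁, −δ₀] ∪ [δ₀, δ₁]. -/

import Mathlib

open Matrix

/-- The matrix absolute value `|A| = V |Λ| V*` of a real symmetric matrix. -/
noncomputable def matAbs {n : Type*} [Fintype n] [DecidableEq n]
    {A : Matrix n n ℝ} (hA : A.IsHermitian) : Matrix n n ℝ :=
  (hA.eigenvectorUnitary : Matrix n n ℝ) *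
    Matrix.diagonal (fun i => |hA.eigenvalues i|) *
    star (hA.eigenvectorUnitary : Matrix n n ℝ)

section Aux

variable {n : Type*} [Fintype n] [DecidableEq n] {A : Matrix n n ℝ} (hA : A.IsHermitian)

lemma spectral' : A = (hA.eigenvectorUnitary : Matrix n n ℝ) *
    Matrix.diagonal hA.eigenvalues * star (hA.eigenvectorUnitary : Matrix n n ℝ) := by
  have := hA.spectral_theorem
  simpa using this

lemma matAbs_herm : (matAbs hA).IsHermitian := by
  unfold matAbs Matrix.IsHermitian
  rw [conjTranspose_mul, conjTranspose_mul, diagonal_conjTranspose]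
  simp [Matrix.mul_assoc, star_star, Matrix.star_eq_conjTranspose,
    conjTranspose_eq_transpose_of_trivial]

lemma eig_ne (hdet : IsUnit A.det) (i : n) : hA.eigenvalues i ≠ 0 := by
  intro h
  have hd := hA.det_eq_prod_eigenvalues
  rw [Finset.prod_eq_zero (Finset.mem_univ i) (by simp [h])] at hd
  exact (hdet.ne_zero) hd

lemma matAbs_inv (hdet : IsUnit A.det) :
    (matAbs hA)⁻¹ = (hA.eigenvectorUnitary : Matrix n n ℝ) *
      Matrix.diagonal (fun i => |hA.eigenvalues i|⁻¹) *
      star (hA.eigenvectorUnitary : Matrix n n ℝ) := by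
  apply inv_eq_right_inv
  have hU : star (hA.eigenvectorUnitary : Matrix n n ℝ) *
      (hA.eigenvectorUnitary : Matrix n n ℝ) = 1 :=
    Matrix.UnitaryGroup.star_mul_self _
  have hUU : (hA.eigenvectorUnitary : Matrix n n ℝ) *
      star (hA.eigenvectorUnitary : Matrix n n ℝ) = 1 :=
    (Matrix.mem_unitaryGroup_iff).mp (hA.eigenvectorUnitary).2
  have hU' : ∀ X : Matrix n n ℝ, star (hA.eigenvectorUnitary : Matrix n n ℝ) *
      ((hA.eigenvectorUnitary : Matrix n n ℝ) * X) = X := fun X => by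
    rw [← Matrix.mul_assoc, hU, Matrix.one_mul]
  have h1 : Matrix.diagonal (fun i => |hA.eigenvalues i|) *
      Matrix.diagonal (fun i => |hA.eigenvalues i|⁻¹) = (1 : Matrix n n ℝ) := by
    rw [diagonal_mul_diagonal]
    have : (fun i => |hA.eigenvalues i| * |hA.eigenvalues i|⁻¹) = fun _ => (1:ℝ) := by
      funext i
      exact mul_inv_cancel₀ (abs_ne_zero.mpr (eig_ne hA hdet i))
    rw [this, diagonal_one]
  unfold matAbs
  simp only [Matrix.mul_assoc]
  rw [hU', ← Matrix.mul_assoc (Matrix.diagonal _) (Matrix.diagonal _), h1, Matrix.one_mul, hUU]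

lemma matAbs_key (hdet : IsUnit A.det) : A * (matAbs hA)⁻¹ * A = matAbs hA := by
  have hAs := spectral' hA
  have hU : star (hA.eigenvectorUnitary : Matrix n n ℝ) *
      (hA.eigenvectorUnitary : Matrix n n ℝ) = 1 :=
    Matrix.UnitaryGroup.star_mul_self _
  have hU' : ∀ X : Matrix n n ℝ, star (hA.eigenvectorUnitary : Matrix n n ℝ) *
      ((hA.eigenvectorUnitary : Matrix n n ℝ) * X) = X := fun X => by
    rw [← Matrix.mul_assoc, hU, Matrix.one_mul]
  rw [matAbs_inv hA hdet]
  set U := (hA.eigenvectorUnitary : Matrix n n ℝ) with hUdef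
  set D := Matrix.diagonal hA.eigenvalues with hD
  set E := Matrix.diagonal (fun i => |hA.eigenvalues i|⁻¹) with hE
  have hDED : D * (E * D) = Matrix.diagonal (fun i => |hA.eigenvalues i|) := by
    rw [hD, hE, diagonal_mul_diagonal, diagonal_mul_diagonal]
    have hfun : (fun i => hA.eigenvalues i * (|hA.eigenvalues i|⁻¹ * hA.eigenvalues i))
        = fun i => |hA.eigenvalues i| := by
      funext i
      have h : hA.eigenvalues i ≠ 0 := eig_ne hA hdet i
      have h2 : |hA.eigenvalues i| ≠ 0 := abs_ne_zero.mpr h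
      have habs := abs_mul_abs_self (hA.eigenvalues i)
      field_simp
      rw [sq_abs]
    rw [hfun]
  calc A * (U * E * star U) * A
      = (U * D * star U) * (U * E * star U) * (U * D * star U) := by rw [← hAs]
    _ = U * (D * (E * D)) * star U := by
        simp only [Matrix.mul_assoc]
        rw [hU', hU']
    _ = matAbs hA := by rw [hDED]; rfl


lemma dp_symm {n : Type*} [Fintype n] {M : Matrix n n ℝ} (hM : M.IsHermitian)
    (x y : n → ℝ) : x ⬝ᵥ M *ᵥ y = y ⬝ᵥ M *ᵥ x := by
  have h : Mᵀ = M := by simpa [conjTranspose_eq_transpose_of_trivial] using hM.eq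
  rw [dotProduct_mulVec, ← mulVec_transpose, h, dotProduct_comm]

lemma dp_nonneg {n : Type*} [Fintype n] {M : Matrix n n ℝ} (hM : M.PosSemidef)
    (x : n → ℝ) : 0 ≤ x ⬝ᵥ M *ᵥ x := by simpa using hM.re_dotProduct_nonneg x

lemma dp_pos {n : Type*} [Fintype n] {M : Matrix n n ℝ} (hM : M.PosDef)
    {x : n → ℝ} (hx : x ≠ 0) : 0 < x ⬝ᵥ M *ᵥ x := by simpa using hM.re_dotProduct_pos hx

lemma cs {n : Type*} [Fintype n] {M : Matrix n n ℝ} (hM : M.PosSemidef)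
    (x y : n → ℝ) : (x ⬝ᵥ M *ᵥ y)^2 ≤ (x ⬝ᵥ M *ᵥ x) * (y ⬝ᵥ M *ᵥ y) := by
  have key : discrim (y ⬝ᵥ M *ᵥ y) (2 * (x ⬝ᵥ M *ᵥ y)) (x ⬝ᵥ M *ᵥ x) ≤ 0 := by
    apply discrim_le_zero
    intro t
    have h := dp_nonneg hM (x + t • y)
    have hsym := dp_symm hM.1 y x
    simp only [mulVec_add, mulVec_smul, dotProduct_add, add_dotProduct,
      dotProduct_smul, smul_dotProduct, smul_eq_mul] at h
    rw [hsym] at h; nlinarith [h]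
  rw [discrim] at key
  nlinarith [key]

theorem main {n : Type*} [Fintype n] [DecidableEq n]
    {A T : Matrix n n ℝ} (hA : A.IsHermitian)
    (hT : T.PosDef)
    {δ₀ δ₁ : ℝ} (hδ₀ : 0 < δ₀)
    {B : Matrix n n ℝ} (hBh : B.IsHermitian) (hkey : A * B⁻¹ * A = B)
    (hlow : ∀ v : n → ℝ, δ₀ * (v ⬝ᵥ T⁻¹.mulVec v) ≤ v ⬝ᵥ B.mulVec v)
    (hup : ∀ v : n → ℝ, v ⬝ᵥ B.mulVec v ≤ δ₁ * (v ⬝ᵥ T⁻¹.mulVec v)) :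
    ∀ lam ∈ spectrum ℝ (T * A),
      lam ∈ Set.Icc (-δ₁) (-δ₀) ∪ Set.Icc δ₀ δ₁ := by
  intro lam hlam
  have hTdet : IsUnit T.det := isUnit_iff_ne_zero.mpr (ne_of_gt hT.det_pos)
  have hGpd : T⁻¹.PosDef := hT.inv
  -- B is positive definite
  have hBpd : B.PosDef := by
    refine .of_dotProduct_mulVec_pos hBh (fun x hx => ?_)
    have h1 := hlow x
    have h2 := dp_pos hGpd hx
    simp only [star_trivial, RCLike.re_to_real]
    nlinarith
  -- extract eigenvector
  rw [spectrum.mem_iff] at hlam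
  have hdet0 : (algebraMap ℝ (Matrix n n ℝ) lam - T * A).det = 0 := by
    by_contra h
    exact hlam ((Matrix.isUnit_iff_isUnit_det _).mpr (isUnit_iff_ne_zero.mpr h))
  obtain ⟨v, hv0, hv⟩ := (Matrix.exists_mulVec_eq_zero_iff).mpr hdet0
  have heig : (T * A) *ᵥ v = lam • v := by
    rw [sub_mulVec, Algebra.algebraMap_eq_smul_one, smul_mulVec, one_mulVec,
      sub_eq_zero] at hv
    exact hv.symm
  set G := T⁻¹ with hGdef
  set w := G *ᵥ v with hwdef
  have hAv : A *ᵥ v = lam • w := by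
    have h1 : G * (T * A) = A := by
      rw [hGdef, ← Matrix.mul_assoc, Matrix.nonsing_inv_mul T hTdet, Matrix.one_mul]
    calc A *ᵥ v = (G * (T * A)) *ᵥ v := by rw [h1]
      _ = G *ᵥ ((T * A) *ᵥ v) := (mulVec_mulVec v G (T*A)).symm
      _ = lam • (G *ᵥ v) := by rw [heig, mulVec_smul]
  have hBdet : IsUnit B.det := isUnit_iff_ne_zero.mpr (ne_of_gt hBpd.det_pos)
  set u := B⁻¹ *ᵥ w with hudef
  set t := w ⬝ᵥ B⁻¹ *ᵥ w with htdef
  have hBu : B *ᵥ u = w := by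
    rw [hudef, mulVec_mulVec, Matrix.mul_nonsing_inv B hBdet, one_mulVec]
  have huw : u ⬝ᵥ w = t := by rw [htdef, dotProduct_comm]
  -- v ⬝ B v = lam² t
  have hc : v ⬝ᵥ B *ᵥ v = lam ^ 2 * t := by
    conv_lhs => rw [← hkey]
    have e1 : (A * B⁻¹ * A) *ᵥ v = lam • (A *ᵥ u) := by
      rw [Matrix.mul_assoc, ← mulVec_mulVec, ← mulVec_mulVec, hAv, mulVec_smul, mulVec_smul,
        ← hudef]
    rw [e1, dotProduct_smul, smul_eq_mul, dp_symm hA v u, hAv, dotProduct_smul, smul_eq_mul,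
      huw]
    ring
  have hcpos : 0 < v ⬝ᵥ B *ᵥ v := dp_pos hBpd hv0
  have ht : 0 < t := by nlinarith [sq_nonneg lam, hcpos.trans_eq hc]
  have hlam2 : 0 < lam ^ 2 := by nlinarith [hcpos.trans_eq hc]
  -- dot products
  have hgB : v ⬝ᵥ B *ᵥ u = v ⬝ᵥ G *ᵥ v := by rw [hBu]
  have htG : t = v ⬝ᵥ G *ᵥ u := by
    rw [dp_symm hGpd.1 v u, ← huw, hwdef, dotProduct_comm]
  have huBu : u ⬝ᵥ B *ᵥ u = t := by rw [hBu, huw]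
  have hgpos : 0 < v ⬝ᵥ G *ᵥ v := dp_pos hGpd hv0
  have huGu : 0 ≤ u ⬝ᵥ G *ᵥ u := dp_nonneg hGpd.posSemidef u
  -- lower bound : δ₀² ≤ lam²
  have hlo : δ₀ ^ 2 ≤ lam ^ 2 := by
    have hcs := cs hGpd.posSemidef v u
    rw [← htG] at hcs
    have h1 := hlow v
    have h2 := hlow u
    rw [huBu] at h2
    rw [hc] at h1
    have hprod : (δ₀ * (v ⬝ᵥ G *ᵥ v)) * (δ₀ * (u ⬝ᵥ G *ᵥ u)) ≤ (lam ^ 2 * t) * t :=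
      mul_le_mul h1 h2 (by positivity) (hc ▸ hcpos.le)
    nlinarith [hprod, mul_le_mul_of_nonneg_left hcs (by positivity : (0:ℝ) ≤ δ₀ ^ 2),
      mul_pos ht ht]
  have hδ₁pos : 0 < δ₁ := by
    have h1 := hup v
    rw [hc] at h1
    by_contra hcon
    push_neg at hcon
    have h2 : δ₁ * (v ⬝ᵥ G *ᵥ v) ≤ 0 := mul_nonpos_of_nonpos_of_nonneg hcon hgpos.le
    linarith [mul_pos hlam2 ht]
  -- upper bound : lam² ≤ δ₁²
  have hhi : lam ^ 2 ≤ δ₁ ^ 2 := by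
    have hcs := cs hBpd.posSemidef v u
    rw [hgB, hc, huBu] at hcs
    have h1 := hup v
    rw [hc] at h1
    have hsq : (lam ^ 2 * t) ^ 2 ≤ (δ₁ * (v ⬝ᵥ G *ᵥ v)) ^ 2 := by
      apply sq_le_sq' _ h1
      have := mul_pos hlam2 ht
      have := mul_pos hδ₁pos hgpos
      linarith
    have step1 : (lam ^ 2 * t) ^ 2 ≤ δ₁ ^ 2 * (lam ^ 2 * t * t) := by
      calc (lam ^ 2 * t) ^ 2 ≤ (δ₁ * (v ⬝ᵥ G *ᵥ v)) ^ 2 := hsq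
        _ = δ₁ ^ 2 * (v ⬝ᵥ G *ᵥ v) ^ 2 := by ring
        _ ≤ δ₁ ^ 2 * (lam ^ 2 * t * t) :=
            mul_le_mul_of_nonneg_left hcs (sq_nonneg δ₁)
    have step2 : lam ^ 2 * (lam ^ 2 * t * t) ≤ δ₁ ^ 2 * (lam ^ 2 * t * t) := by
      calc lam ^ 2 * (lam ^ 2 * t * t) = (lam ^ 2 * t) ^ 2 := by ring
        _ ≤ δ₁ ^ 2 * (lam ^ 2 * t * t) := step1
    exact le_of_mul_le_mul_right step2 (mul_pos (mul_pos hlam2 ht) ht)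
  -- conclude
  rcases le_or_gt 0 lam with h | h
  · right
    constructor
    · nlinarith
    · nlinarith [hδ₁pos]
  · left
    constructor
    · nlinarith [hδ₁pos]
    · nlinarith

end Aux

/-- If `A` is symmetric nonsingular indefinite, `T` is SPD, and
`δ₀ (v, T⁻¹ v) ≤ (v, |A| v) ≤ δ₁ (v, T⁻¹ v)` for all `v` with
`δ₁ ≥ δ₀ > 0`, then every eigenvalue of `TA` lies in
`[−δ₁, −δ₀] ∪ [δ₀, δ₁]`. -/
theorem spectrum_TA_subset {n : Type*} [Fintype n] [DecidableEq n]
    {A T : Matrix n n ℝ} (hA : A.IsHermitian) (hdet : IsUnit A.det)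
    (hT : T.PosDef)
    (hindef : (∃ i, hA.eigenvalues i < 0) ∧ (∃ i, 0 < hA.eigenvalues i))
    {δ₀ δ₁ : ℝ} (hδ₀ : 0 < δ₀) (hδ : δ₀ ≤ δ₁)
    (hlow : ∀ v : n → ℝ, δ₀ * (v ⬝ᵥ T⁻¹.mulVec v) ≤ v ⬝ᵥ (matAbs hA).mulVec v)
    (hup : ∀ v : n → ℝ, v ⬝ᵥ (matAbs hA).mulVec v ≤ δ₁ * (v ⬝ᵥ T⁻¹.mulVec v)) :
    ∀ lam ∈ spectrum ℝ (T * A),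
      lam ∈ Set.Icc (-δ₁) (-δ₀) ∪ Set.Icc δ₀ δ₁ := by
  exact main hA hT hδ₀ (matAbs_herm hA) (matAbs_key hA hdet) hlow hup
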